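/- The polynomials f = X³ + 6X² + 9X + 1 and g = X³ + 18X² + 81X + 27 in ℤ[X] are both irreducible over ℚ, their factorization patterns agree modulo every prime number p, and yet disc(f) = 3⁴ ≠ 3¹⁰ = disc(g). In particular, the discriminant of a polynomial is not determined by its factorization patterns modulo primes. -/

import Mathlib

open Polynomial UniqueFactorizationMonoid

noncomputable section

/-- The factorization pattern of a polynomial `h` over a field: the multiset of pairs
`(multiplicity, degree)` over the distinct irreducible factors of `h`. -/
def pattern {K : Type*} [Field K] (h : Polynomial K) : Multiset (ℕ × ℕ) := by
  classical
  exact (normalizedFactors h).toFinset.val.map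
    fun g => ((normalizedFactors h).count g, g.natDegree)

/-- The factorization pattern of `f ∈ ℤ[X]` modulo a prime `p`. -/
def patternModZ (p : ℕ) (f : Polynomial ℤ) : Multiset (ℕ × ℕ) :=
  if hp : p.Prime then
    haveI : Fact p.Prime := ⟨hp⟩
    pattern (f.map (Int.castRingHom (ZMod p)))
  else 0

/-- The resultant of `P` (of degree `m`) and `Q` (of degree `n`): the determinant of the
Sylvester matrix. -/
def polyResultant {R : Type*} [CommRing R] (m n : ℕ) (P Q : Polynomial R) : R :=
  (Matrix.of fun i j : Fin (m + n) =>
      if (i : ℕ) < n then (if (i : ℕ) ≤ (j : ℕ) then P.coeff ((j : ℕ) - (i : ℕ)) else 0)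
      else (if (i : ℕ) - n ≤ (j : ℕ) then Q.coeff ((j : ℕ) - ((i : ℕ) - n)) else 0)).det

/-- The discriminant of a monic polynomial `f`, namely `(-1)^(n(n-1)/2) · Res(f, f')`
where `n = deg f`. -/
def polyDisc {R : Type*} [CommRing R] (f : Polynomial R) : R :=
  (-1) ^ (f.natDegree * (f.natDegree - 1) / 2) *
    polyResultant f.natDegree (f.natDegree - 1) f (Polynomial.derivative f)

end

noncomputable section

section Aux

attribute [local instance] Classical.propDecidable

variable {K : Type*} [Field K]

lemma pattern_eq_of_map (h1 h2 : K[X]) (φ : K[X] → K[X])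
    (hinj : Set.InjOn φ {x | x ∈ normalizedFactors h1})
    (hdeg : ∀ x ∈ normalizedFactors h1, (φ x).natDegree = x.natDegree)
    (hmap : normalizedFactors h2 = (normalizedFactors h1).map φ) :
    pattern h2 = pattern h1 := by
  unfold pattern
  rw [hmap, Multiset.toFinset_map, Finset.image_val_of_injOn
    (by intro a ha b hb hab; exact hinj (by simpa [mem_primeFactors] using ha) (by simpa [mem_primeFactors] using hb) hab),
    Multiset.map_map]
  refine Multiset.map_congr rfl ?_
  intro x hx
  have hx' : x ∈ normalizedFactors h1 := by simpa [mem_primeFactors] using hx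
  simp only [Function.comp_apply]
  rw [Multiset.count_map_eq_count φ _ hinj x hx', hdeg x hx']

lemma normalizedFactors_mulEquiv (e : K[X] ≃* K[X]) (h : K[X]) (h0 : h ≠ 0) :
    normalizedFactors (e h) = (normalizedFactors h).map (fun q => normalize (e q)) := by
  have hassoc : Associated ((normalizedFactors h).prod) h := prod_normalizedFactors h0
  have hassoc2 : Associated (e ((normalizedFactors h).prod)) (e h) := by
    obtain ⟨u, hu⟩ := hassoc
    exact ⟨Units.map e.toMonoidHom u, by simpa [← map_mul] using congrArg e hu⟩
  have hprod : e ((normalizedFactors h).prod) = ((normalizedFactors h).map e).prod :=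
    map_multiset_prod e _
  rw [← hassoc2.normalizedFactors_eq, hprod, normalizedFactors_prod_eq, Multiset.map_map]
  · rfl
  · intro a ha
    obtain ⟨b, hb, rfl⟩ := Multiset.mem_map.1 ha
    exact (MulEquiv.irreducible_iff e).2 (irreducible_of_normalized_factor b hb)

lemma pattern_mulEquiv (e : K[X] ≃* K[X]) (h : K[X]) (h0 : h ≠ 0)
    (hdeg : ∀ q : K[X], (e q).natDegree = q.natDegree) :
    pattern (e h) = pattern h := by
  refine pattern_eq_of_map h (e h) (fun q => normalize (e q)) ?_ ?_
    (normalizedFactors_mulEquiv e h h0)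
  · intro a ha b hb hab
    have hab' : normalize (e a) = normalize (e b) := hab
    have h1 : Associated (e a) (e b) := by
      rw [← dvd_dvd_iff_associated]
      exact ⟨(dvd_normalize_iff).2 dvd_rfl |>.trans (hab' ▸ normalize_dvd_iff.2 dvd_rfl),
        (dvd_normalize_iff).2 dvd_rfl |>.trans (hab' ▸ normalize_dvd_iff.2 dvd_rfl)⟩
    have h2 : Associated a b := by
      obtain ⟨u, hu⟩ := h1
      refine ⟨Units.map e.symm.toMonoidHom u, ?_⟩
      have := congrArg e.symm hu
      simpa [map_mul] using this
    rw [← normalize_normalized_factor a ha, ← normalize_normalized_factor b hb,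
      normalize_eq_normalize h2.dvd h2.symm.dvd]
  · intro x hx
    have : (normalize (e x)).degree = (e x).degree := degree_normalize
    have hnd : (normalize (e x)).natDegree = (e x).natDegree := by
      simp [natDegree, this]
    rw [hnd, hdeg]

def scaleRingEquiv (c : K) (hc : c ≠ 0) : K[X] ≃+* K[X] where
  toFun q := q.comp (C c * X)
  invFun q := q.comp (C c⁻¹ * X)
  left_inv q := by
    dsimp only
    rw [comp_assoc, mul_comp, C_comp, X_comp, ← mul_assoc, ← C_mul,
      mul_inv_cancel₀ hc, C_1, one_mul, comp_X]
  right_inv q := by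
    dsimp only
    rw [comp_assoc, mul_comp, C_comp, X_comp, ← mul_assoc, ← C_mul,
      inv_mul_cancel₀ hc, C_1, one_mul, comp_X]
  map_mul' p q := by exact mul_comp _ _ _
  map_add' p q := by exact add_comp

lemma scaleRingEquiv_natDegree (c : K) (hc : c ≠ 0) (q : K[X]) :
    ((scaleRingEquiv c hc) q).natDegree = q.natDegree := by
  show (q.comp (C c * X)).natDegree = q.natDegree
  rw [natDegree_comp, natDegree_C_mul_X c hc, mul_one]

lemma pattern_C_mul (u : K) (hu : u ≠ 0) (h : K[X]) :
    pattern (C u * h) = pattern h := by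
  unfold pattern
  have : Associated (C u * h) h :=
    associated_unit_mul_left h (C u) (isUnit_C.2 (Ne.isUnit hu))
  rw [this.normalizedFactors_eq]

lemma pattern_irreducible_pow {q : K[X]} (hq : Irreducible q) (hm : q.Monic) (n : ℕ)
    (hn : n ≠ 0) : pattern (q ^ n) = {(n, q.natDegree)} := by
  unfold pattern
  rw [hq.normalizedFactors_pow, hm.normalize_eq_self, Multiset.toFinset_replicate, if_neg hn]
  simp

end Aux

end

section MainAux

attribute [local instance] Classical.propDecidable

open Polynomial

/-- pattern mod p of f and g agree, p prime. -/
lemma patterns_agree (p : ℕ) (hp : p.Prime) :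
    patternModZ p (Polynomial.X ^ 3 + Polynomial.C 6 * Polynomial.X ^ 2 +
        Polynomial.C 9 * Polynomial.X + Polynomial.C 1) =
      patternModZ p (Polynomial.X ^ 3 + Polynomial.C 18 * Polynomial.X ^ 2 +
        Polynomial.C 81 * Polynomial.X + Polynomial.C 27) := by
  haveI : Fact p.Prime := ⟨hp⟩
  rw [patternModZ, dif_pos hp, patternModZ, dif_pos hp]
  have hfmap : ((Polynomial.X ^ 3 + Polynomial.C 6 * Polynomial.X ^ 2 +
      Polynomial.C 9 * Polynomial.X + Polynomial.C 1 : Polynomial ℤ).map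
      (Int.castRingHom (ZMod p))) = X ^ 3 + C 6 * X ^ 2 + C 9 * X + C 1 := by
    simp [Polynomial.map_add, Polynomial.map_mul, Polynomial.map_pow, map_ofNat]
  have hgmap : ((Polynomial.X ^ 3 + Polynomial.C 18 * Polynomial.X ^ 2 +
      Polynomial.C 81 * Polynomial.X + Polynomial.C 27 : Polynomial ℤ).map
      (Int.castRingHom (ZMod p))) = X ^ 3 + C 18 * X ^ 2 + C 81 * X + C 27 := by
    simp [Polynomial.map_add, Polynomial.map_mul, Polynomial.map_pow, map_ofNat]
  rw [hfmap, hgmap]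
  by_cases h3 : p = 3
  · subst h3
    have hf : (X ^ 3 + C 6 * X ^ 2 + C 9 * X + C 1 : (ZMod 3)[X]) = (X + C 1) ^ 3 := by
      have h6 : (6 : ZMod 3) = 0 := by rfl
      have h9 : (9 : ZMod 3) = 0 := by rfl
      rw [h6, h9, C_0, zero_mul, zero_mul, add_zero, add_zero,
        add_pow_char (R := Polynomial (ZMod 3)) (p := 3), ← C_pow]
      norm_num
    have hg : (X ^ 3 + C 18 * X ^ 2 + C 81 * X + C 27 : (ZMod 3)[X]) = X ^ 3 := by
      have h18 : (18 : ZMod 3) = 0 := by rfl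
      have h81 : (81 : ZMod 3) = 0 := by rfl
      have h27 : (27 : ZMod 3) = 0 := by rfl
      rw [h18, h81, h27, C_0, zero_mul, zero_mul, add_zero, add_zero, add_zero]
    rw [hf, hg, pattern_irreducible_pow (irreducible_of_degree_eq_one (degree_X_add_C 1))
        (monic_X_add_C 1) 3 (by norm_num),
      pattern_irreducible_pow irreducible_X monic_X 3 (by norm_num),
      natDegree_X_add_C, natDegree_X]
  · -- p ≠ 3
    have h3K : (3 : (ZMod p)) ≠ 0 := by
      intro h
      have : ((3 : ℕ) : (ZMod p)) = 0 := by exact_mod_cast h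
      rw [ZMod.natCast_eq_zero_iff] at this
      exact h3 ((Nat.prime_dvd_prime_iff_eq hp (by norm_num)).1 this)
    have h27K : (27 : (ZMod p)) ≠ 0 := by
      intro h
      apply h3K
      have : (27 : (ZMod p)) = 3 ^ 3 := by norm_num
      rw [this] at h
      exact pow_eq_zero_iff (by norm_num) |>.1 h
    set e := scaleRingEquiv (3 : (ZMod p)) h3K with he
    have hkey : e (X ^ 3 + C 18 * X ^ 2 + C 81 * X + C 27) =
        C 27 * (X ^ 3 + C 6 * X ^ 2 + C 9 * X + C 1) := by
      show ((X ^ 3 + C 18 * X ^ 2 + C 81 * X + C 27 : (ZMod p)[X]).comp (C 3 * X)) = _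
      simp only [add_comp, mul_comp, pow_comp, X_comp, C_comp]
      simp only [map_ofNat, map_one]
      ring
    have hg0 : (X ^ 3 + C 18 * X ^ 2 + C 81 * X + C 27 : (ZMod p)[X]) ≠ 0 := by
      intro h
      have := congrArg (fun q => Polynomial.coeff q 3) h
      simp [coeff_add, coeff_C_mul, coeff_X_pow, coeff_C, coeff_X] at this
    calc pattern (X ^ 3 + C 6 * X ^ 2 + C 9 * X + C 1 : (ZMod p)[X])
        = pattern (C 27 * (X ^ 3 + C 6 * X ^ 2 + C 9 * X + C 1 : (ZMod p)[X])) :=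
          (pattern_C_mul 27 h27K _).symm
      _ = pattern (e (X ^ 3 + C 18 * X ^ 2 + C 81 * X + C 27)) := by rw [hkey]
      _ = pattern (X ^ 3 + C 18 * X ^ 2 + C 81 * X + C 27 : (ZMod p)[X]) :=
          pattern_mulEquiv e _ hg0 (scaleRingEquiv_natDegree 3 h3K)

end MainAux



section MainAux2

open Polynomial

lemma irred_aux (a b c : ℤ) (h6 : (Int.castRingHom (ZMod 2)) a = 0)
    (h9 : (Int.castRingHom (ZMod 2)) b = 1) (h1 : (Int.castRingHom (ZMod 2)) c = 1) :
    Irreducible ((Polynomial.X ^ 3 + Polynomial.C a * Polynomial.X ^ 2 +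
      Polynomial.C b * Polynomial.X + Polynomial.C c : Polynomial ℤ).map
      (Int.castRingHom ℚ)) := by
  have hm : (Polynomial.X ^ 3 + Polynomial.C a * Polynomial.X ^ 2 +
      Polynomial.C b * Polynomial.X + Polynomial.C c : Polynomial ℤ).Monic := by
    monicity!
  rw [← Polynomial.IsPrimitive.Int.irreducible_iff_irreducible_map_cast hm.isPrimitive]
  refine Polynomial.Monic.irreducible_of_irreducible_map (Int.castRingHom (ZMod 2)) _ hm ?_
  have hmap : ((Polynomial.X ^ 3 + Polynomial.C a * Polynomial.X ^ 2 +
      Polynomial.C b * Polynomial.X + Polynomial.C c : Polynomial ℤ).map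
      (Int.castRingHom (ZMod 2))) = X ^ 3 + X + 1 := by
    simp only [Polynomial.map_add, Polynomial.map_mul, Polynomial.map_pow, Polynomial.map_C,
      Polynomial.map_X, Polynomial.map_one, h6, h9, h1, C_0, C_1, zero_mul, one_mul, add_zero]
  rw [hmap]
  have hd : (X ^ 3 + X + 1 : (ZMod 2)[X]).natDegree = 3 := by compute_degree!
  rw [Polynomial.irreducible_iff_roots_eq_zero_of_degree_le_three (by omega) (by omega)]
  have h0 : (X ^ 3 + X + 1 : (ZMod 2)[X]) ≠ 0 := by
    intro h; rw [h] at hd; simp at hd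
  refine Multiset.eq_zero_of_forall_notMem ?_
  intro x hx
  rw [mem_roots h0] at hx
  have hval : ∀ y : ZMod 2, eval y (X ^ 3 + X + 1 : (ZMod 2)[X]) ≠ 0 := by
    intro y
    simp only [eval_add, eval_pow, eval_X, eval_one]
    revert y; decide
  exact hval x hx

set_option maxHeartbeats 1000000 in
lemma disc_f : polyDisc (Polynomial.X ^ 3 + Polynomial.C 6 * Polynomial.X ^ 2 +
        Polynomial.C 9 * Polynomial.X + Polynomial.C 1 : Polynomial ℤ) = 3 ^ 4 := by
  set f : Polynomial ℤ := Polynomial.X ^ 3 + Polynomial.C 6 * Polynomial.X ^ 2 +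
    Polynomial.C 9 * Polynomial.X + Polynomial.C 1 with hf
  have hc : ∀ k, f.coeff k = if k = 0 then 1 else if k = 1 then 9 else
      if k = 2 then 6 else if k = 3 then 1 else 0 := by
    intro k
    rw [hf]
    simp only [coeff_add, coeff_C_mul, coeff_X_pow, coeff_C, coeff_X]
    rcases k with _|_|_|_|k <;> simp <;> omega
  have hd : f.natDegree = 3 := by rw [hf]; compute_degree!
  rw [polyDisc, hd]
  have hM : polyResultant 3 (3-1) f (derivative f) =
      (!![1,9,6,1,0; 0,1,9,6,1; 9,12,3,0,0; 0,9,12,3,0; 0,0,9,12,3] :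
        Matrix (Fin 5) (Fin 5) ℤ).det := by
    rw [polyResultant]
    congr 1
    ext i j
    fin_cases i <;> fin_cases j <;>
      simp [coeff_derivative, hc] <;> decide
  rw [hM]
  simp only [Matrix.det_succ_row_zero, Fin.sum_univ_succ, Matrix.det_unique, Fin.sum_univ_zero]
  decide

set_option maxHeartbeats 1000000 in
lemma disc_g : polyDisc (Polynomial.X ^ 3 + Polynomial.C 18 * Polynomial.X ^ 2 +
        Polynomial.C 81 * Polynomial.X + Polynomial.C 27 : Polynomial ℤ) = 3 ^ 10 := by
  set f : Polynomial ℤ := Polynomial.X ^ 3 + Polynomial.C 18 * Polynomial.X ^ 2 +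
    Polynomial.C 81 * Polynomial.X + Polynomial.C 27 with hf
  have hc : ∀ k, f.coeff k = if k = 0 then 27 else if k = 1 then 81 else
      if k = 2 then 18 else if k = 3 then 1 else 0 := by
    intro k
    rw [hf]
    simp only [coeff_add, coeff_C_mul, coeff_X_pow, coeff_C, coeff_X]
    rcases k with _|_|_|_|k <;> simp <;> omega
  have hd : f.natDegree = 3 := by rw [hf]; compute_degree!
  rw [polyDisc, hd]
  have hM : polyResultant 3 (3-1) f (derivative f) =
      (!![27,81,18,1,0; 0,27,81,18,1; 81,36,3,0,0; 0,81,36,3,0; 0,0,81,36,3] :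
        Matrix (Fin 5) (Fin 5) ℤ).det := by
    rw [polyResultant]
    congr 1
    ext i j
    fin_cases i <;> fin_cases j <;>
      simp [coeff_derivative, hc] <;> decide
  rw [hM]
  simp only [Matrix.det_succ_row_zero, Fin.sum_univ_succ, Matrix.det_unique, Fin.sum_univ_zero]
  decide

end MainAux2

/-- **Example 4.9.** The polynomials `f = X³ + 6X² + 9X + 1` and
`g = X³ + 18X² + 81X + 27` are both irreducible over `ℚ`, their factorization patterns
agree modulo every prime `p`, and yet `disc(f) = 3⁴ ≠ 3¹⁰ = disc(g)`. -/
theorem example_same_patterns_different_discriminant :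
    Irreducible ((Polynomial.X ^ 3 + Polynomial.C 6 * Polynomial.X ^ 2 +
        Polynomial.C 9 * Polynomial.X + Polynomial.C 1 : Polynomial ℤ).map
        (Int.castRingHom ℚ)) ∧
    Irreducible ((Polynomial.X ^ 3 + Polynomial.C 18 * Polynomial.X ^ 2 +
        Polynomial.C 81 * Polynomial.X + Polynomial.C 27 : Polynomial ℤ).map
        (Int.castRingHom ℚ)) ∧
    (∀ p : ℕ, p.Prime →
      patternModZ p (Polynomial.X ^ 3 + Polynomial.C 6 * Polynomial.X ^ 2 +
          Polynomial.C 9 * Polynomial.X + Polynomial.C 1) =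
        patternModZ p (Polynomial.X ^ 3 + Polynomial.C 18 * Polynomial.X ^ 2 +
          Polynomial.C 81 * Polynomial.X + Polynomial.C 27)) ∧
    polyDisc (Polynomial.X ^ 3 + Polynomial.C 6 * Polynomial.X ^ 2 +
        Polynomial.C 9 * Polynomial.X + Polynomial.C 1 : Polynomial ℤ) = 3 ^ 4 ∧
    polyDisc (Polynomial.X ^ 3 + Polynomial.C 18 * Polynomial.X ^ 2 +
        Polynomial.C 81 * Polynomial.X + Polynomial.C 27 : Polynomial ℤ) = 3 ^ 10 ∧
    (3 ^ 4 : ℤ) ≠ 3 ^ 10 := by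
  refine ⟨?_, ?_, patterns_agree, disc_f, disc_g, by norm_num⟩
  · exact irred_aux 6 9 1 (by decide) (by decide) (by decide)
  · exact irred_aux 18 81 27 (by decide) (by decide) (by decide)
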